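/- The set C_3 of natural numbers occurring as a coordinate of some 3-color fair game has natural density zero: the quantity #{c ∈ C_3 : c ≤ k}/k tends to 0 as k → ∞. -/

import Mathlib

open Finset Filter

def F {n : ℕ} (x : Fin n → ℤ) : ℤ :=
  (∑ i, x i) ^ 2 - (∑ i, x i) - 4 * ∑ i, ∑ j, if i < j then x i * x j else 0

def C3 : Set ℕ :=
  {c : ℕ | ∃ x : Fin 3 → ℤ, F x = 0 ∧ (∀ i, 0 ≤ x i) ∧ ∃ i, x i = (c : ℤ)}

lemma F_eq (x : Fin 3 → ℤ) : F x = (x 0 + x 1 + x 2)^2 - (x 0 + x 1 + x 2)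
    - 4 * (x 0 * x 1 + x 0 * x 2 + x 1 * x 2) := by
  simp [F, Fin.sum_univ_three]


lemma not_two_mod_three {p : ℕ} (hp : p.Prime) (hp2 : p ≠ 2) (e : ZMod p) (he : e^2 = -3) :
    (p : ZMod 3) ≠ 2 := by
  intro hmod
  have hp3 : p ≠ 3 := by
    rintro rfl
    rw [ZMod.natCast_self] at hmod
    exact absurd hmod (by decide)
  haveI : Fact p.Prime := ⟨hp⟩
  have h3 : (3 : ZMod p) ≠ 0 := by
    intro h
    have : p ∣ 3 := by
      have := (ZMod.natCast_eq_zero_iff 3 p).mp (by exact_mod_cast h)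
      exact this
    exact hp3 ((Nat.prime_dvd_prime_iff_eq hp Nat.prime_three).mp this)
  have h2 : (2 : ZMod p) ≠ 0 := by
    intro h
    have : p ∣ 2 := by
      have := (ZMod.natCast_eq_zero_iff 2 p).mp (by exact_mod_cast h)
      exact this
    exact hp2 ((Nat.prime_dvd_prime_iff_eq hp Nat.prime_two).mp this)
  set u : ZMod p := (e - 1) / 2 with hu
  have h2u : 2 * u = e - 1 := by rw [hu, mul_div_assoc', mul_div_cancel_left₀ _ h2]
  have h40 : (4 : ZMod p) * (u^2 + u + 1) = 0 := by
    linear_combination (e + 2*u + 1) * h2u + he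
  have h4 : (4 : ZMod p) ≠ 0 := by
    intro h
    exact h2 (by
      have : (2:ZMod p) * 2 = 0 := by linear_combination h
      rcases mul_eq_zero.mp this with h'|h' <;> exact h')
  have hu2 : u^2 + u + 1 = 0 := (mul_eq_zero.mp h40).resolve_left h4
  have hu1 : u ≠ 1 := by
    intro h
    rw [h] at hu2
    exact h3 (by linear_combination hu2)
  have hu0 : u ≠ 0 := by
    intro h
    rw [h] at hu2
    simp at hu2
  have hu3 : u^3 = 1 := by linear_combination (u - 1) * hu2
  have hdvd : orderOf u ∣ 3 := orderOf_dvd_of_pow_eq_one hu3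
  have ho : orderOf u = 3 := by
    rcases (Nat.Prime.eq_one_or_self_of_dvd Nat.prime_three _ hdvd) with h|h
    · exact absurd (orderOf_eq_one_iff.mp h) hu1
    · exact h
  have hdiv : (3 : ℕ) ∣ p - 1 := by
    rw [← ho]
    exact orderOf_dvd_of_pow_eq_one (ZMod.pow_card_sub_one_eq_one hu0)
  obtain ⟨t, ht⟩ := hdiv
  have hp1 : 1 ≤ p := hp.one_lt.le
  have hmod3 : p % 3 = 1 := by omega
  rw [← Nat.mod_add_div p 3, hmod3] at hmod
  push_cast at hmod
  rw [show (3 : ZMod 3) = 0 by decide] at hmod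
  simp at hmod
  exact absurd hmod (by decide)

lemma C3_coprime {c : ℕ} (hc : c ∈ C3) {p : ℕ} (hp : p.Prime) (hdvd : p ∣ 2 * c + 1) :
    (p : ZMod 3) ≠ 2 := by
  obtain ⟨x, hFx, -, i, hi⟩ := hc
  rw [F_eq] at hFx
  -- pick the other two coordinates a b with a+b+c symmetric equation
  obtain ⟨a, b, hab⟩ : ∃ a b : ℤ, (2*(a-b))^2 + 3 = (2*(c:ℤ)+1) * (4*(a+b) - 2*c + 3) := by
    fin_cases i <;> simp only [Fin.zero_eta, Fin.mk_one, Fin.reduceFinMk, Fin.isValue] at hi <;> rw [← hi] <;>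
      [exact ⟨x 1, x 2, by linear_combination 4 * hFx⟩;
       exact ⟨x 0, x 2, by linear_combination 4 * hFx⟩;
       exact ⟨x 0, x 1, by linear_combination 4 * hFx⟩]
  have hp2 : p ≠ 2 := by
    rintro rfl
    omega
  -- reduce mod p
  have hpz : ((2 * c + 1 : ℕ) : ℤ) ∣ ((2*(c:ℤ)+1) * (4*(a+b) - 2*c + 3)) := by
    push_cast
    exact ⟨_, rfl⟩
  have hpdvd : (p : ℤ) ∣ (2*(a-b))^2 + 3 := by
    rw [hab]
    exact dvd_trans (Int.natCast_dvd_natCast.mpr hdvd) hpz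
  have he : ((2*(a-b) : ℤ) : ZMod p)^2 = -3 := by
    have h0 : (((2*(a-b))^2 + 3 : ℤ) : ZMod p) = 0 := by
      rw [ZMod.intCast_zmod_eq_zero_iff_dvd]
      exact hpdvd
    push_cast at h0 ⊢
    linear_combination h0
  exact not_two_mod_three hp hp2 _ he

section Analytic
open ArithmeticFunction ArithmeticFunction.vonMangoldt
noncomputable def u (n : ℕ) : ℝ := if n.Prime ∧ (n : ZMod 3) = 2 then (n : ℝ)⁻¹ else 0

lemma u_nonneg (n : ℕ) : 0 ≤ u n := by
  unfold u; split <;> positivity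

lemma not_summable_u : ¬ Summable u := by
  intro hu
  have ha : IsUnit (2 : ZMod 3) := IsUnit.of_mul_eq_one 2 (by decide)
  set R : ℕ → ℝ := residueClass (2 : ZMod 3) with hR
  have hRnn : ∀ n, 0 ≤ R n := residueClass_nonneg (2 : ZMod 3)
  obtain ⟨C, hC⟩ := LSeries_residueClass_lower_bound ha
  have hKsum : Summable (fun n : ℕ ↦ (if n.Prime then 0 else R n) / (n : ℝ)) :=
    summable_residueClass_non_primes_div (2 : ZMod 3)
  set K := ∑' (n : ℕ), (if n.Prime then 0 else R n) / (n : ℝ) with hK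
  -- tail of u
  have hfin : ∀ N : ℕ, Summable (fun n ↦ if n ∈ range N then u n else 0) := fun N ↦
    summable_of_ne_finset_zero (s := range N) (fun n hn ↦ if_neg hn)
  have htail_sum : ∀ N : ℕ, Summable (fun n ↦ if n ∈ range N then 0 else u n) := by
    intro N
    refine hu.of_nonneg_of_le (fun n ↦ ?_) (fun n ↦ ?_) <;> split
    · exact le_rfl
    · exact u_nonneg n
    · exact u_nonneg n
    · exact le_rfl
  have htail_eq : ∀ N : ℕ, ∑' n, (if n ∈ range N then 0 else u n)
      = (∑' n, u n) - ∑ n ∈ range N, u n := by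
    intro N
    have h1 : (fun n ↦ if n ∈ range N then 0 else u n)
        = fun n ↦ u n - (if n ∈ range N then u n else 0) := by
      funext n; by_cases h : n ∈ range N <;> simp [h]
    rw [h1, hu.tsum_sub (hfin N), tsum_eq_sum (s := range N) (fun n hn ↦ if_neg hn)]
    congr 1
    exact Finset.sum_congr rfl (fun n hn ↦ if_pos hn)
  obtain ⟨N, hN⟩ : ∃ N : ℕ, ∑' n, (if n ∈ range N then 0 else u n) < 4⁻¹ := by
    have ht : Tendsto (fun N ↦ ∑' n, (if n ∈ range N then 0 else u n)) atTop (nhds 0) := by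
      simp only [htail_eq]
      have := hu.hasSum.tendsto_sum_nat
      have h2 := Tendsto.const_sub (∑' n, u n) this
      simpa using h2
    exact (ht.eventually (gt_mem_nhds (by norm_num : (0:ℝ) < 4⁻¹))).exists
  set T := ∑' n, (if n ∈ range N then 0 else u n) with hT
  have hTnn : 0 ≤ T := tsum_nonneg (fun n ↦ by split; exact le_rfl; exact u_nonneg n)
  set M := ∑ n ∈ range N, R n with hM
  -- main estimate for each x ∈ Ioc 1 2
  have main : ∀ x : ℝ, x ∈ Set.Ioc 1 2 → 4⁻¹ / (x - 1) ≤ C + K + M := by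
    intro x hx
    have hx1 : (1:ℝ) < x := hx.1
    have hxs : 0 < x - 1 := by linarith
    have hsumx : Summable (fun n : ℕ ↦ R n / (n : ℝ) ^ x) :=
      LSeries.summable_real_of_abscissaOfAbsConv_lt
        ((abscissaOfAbsConv_residueClass_le_one (2 : ZMod 3)).trans_lt (by exact_mod_cast hx1))
    -- pointwise bound
    have hpt : ∀ n : ℕ, R n / (n : ℝ) ^ x ≤
        (if n.Prime then 0 else R n) / n
        + ((if n ∈ range N then R n else 0) + (x-1)⁻¹ * (if n ∈ range N then 0 else u n)) := by
      intro n
      have hg1 : 0 ≤ (if n.Prime then 0 else R n) / (n:ℝ) := by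
        apply div_nonneg _ (Nat.cast_nonneg n); split; exact le_rfl; exact hRnn n
      have hg2 : 0 ≤ (if n ∈ range N then R n else 0) := by split; exacts [hRnn n, le_rfl]
      have hg3 : 0 ≤ (x-1)⁻¹ * (if n ∈ range N then 0 else u n) := by
        apply mul_nonneg (by positivity); split; exacts [le_rfl, u_nonneg n]
      rcases Nat.eq_zero_or_pos n with rfl | hn
      · simp only [residueClass_apply_zero, Nat.cast_zero, Real.zero_rpow (by positivity : x ≠ 0),
          div_zero]
        positivity
      have hn1 : (1:ℝ) ≤ (n:ℝ) := by exact_mod_cast hn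
      have hnx1 : (1:ℝ) ≤ (n:ℝ) ^ x := Real.one_le_rpow hn1 (by linarith)
      have hnnx : (n:ℝ) ≤ (n:ℝ) ^ x := by
        calc (n:ℝ) = (n:ℝ) ^ (1:ℝ) := (Real.rpow_one _).symm
        _ ≤ (n:ℝ) ^ x := Real.rpow_le_rpow_of_exponent_le hn1 hx1.le
      by_cases hp : n.Prime
      · by_cases hsmall : n ∈ range N
        · -- bound by second term
          have : R n / (n:ℝ) ^ x ≤ R n := div_le_self (hRnn n) hnx1
          rw [if_pos hsmall, if_pos hsmall]
          calc R n / (n:ℝ)^x ≤ R n := this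
          _ ≤ _ := by
            have : (x-1)⁻¹ * (0:ℝ) = 0 := by ring
            nlinarith [hg1]
        · -- large prime
          rw [if_neg hsmall, if_neg hsmall, if_pos hp]
          by_cases hmod : (n : ZMod 3) = 2
          · have hRn : R n = Real.log n := by
              rw [hR]
              have hmem : n ∈ {m : ℕ | (m : ZMod 3) = 2} := hmod
              have h := Set.indicator_of_mem hmem (fun m : ℕ => ((vonMangoldt m : ℝ)))
              exact h.trans (vonMangoldt_apply_prime hp)
            have hun : u n = (n:ℝ)⁻¹ := by unfold u; rw [if_pos ⟨hp, hmod⟩]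
            have hnpos : (0:ℝ) < n := by exact_mod_cast hn
            have h0x : (0:ℝ) < (n:ℝ)^x := Real.rpow_pos_of_pos hnpos x
            have hlog : (x-1) * Real.log n ≤ (n:ℝ)^(x-1) := by
              have h1 := Real.log_le_sub_one_of_pos
                (Real.rpow_pos_of_pos hnpos (x-1))
              rw [Real.log_rpow hnpos] at h1
              linarith
            have hpow : (n:ℝ)^(x-1) = (n:ℝ)^x / n := by
              rw [Real.rpow_sub hnpos, Real.rpow_one]
            have hlog2 : Real.log n ≤ (x-1)⁻¹ * ((n:ℝ)^x / n) := by
              rw [← hpow]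
              calc Real.log n = (x-1)⁻¹ * ((x-1) * Real.log n) := by field_simp
              _ ≤ (x-1)⁻¹ * (n:ℝ)^(x-1) :=
                mul_le_mul_of_nonneg_left hlog (inv_nonneg.mpr hxs.le)
            have hkey : Real.log n / (n:ℝ)^x ≤ (x-1)⁻¹ * (n:ℝ)⁻¹ := by
              have h2 : Real.log n / (n:ℝ)^x ≤ ((x-1)⁻¹ * ((n:ℝ)^x / n)) / (n:ℝ)^x :=
                (div_le_div_iff_of_pos_right h0x).mpr hlog2
              calc Real.log n / (n:ℝ)^x ≤ ((x-1)⁻¹ * ((n:ℝ)^x / n)) / (n:ℝ)^x := h2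
              _ = (x-1)⁻¹ * (n:ℝ)⁻¹ := by field_simp
            rw [hRn, hun]
            simp only [zero_div, zero_add]
            exact hkey
          · have hRn : R n = 0 := by
              rw [hR]
              exact Set.indicator_of_notMem (by exact hmod) _
            rw [hRn]
            simp only [zero_div, zero_add]
            exact mul_nonneg (inv_nonneg.mpr hxs.le) (u_nonneg n)
      · -- non-prime
        rw [if_neg hp]
        have : R n / (n:ℝ)^x ≤ R n / n := by
          apply div_le_div_of_nonneg_left (hRnn n) (by exact_mod_cast hn) hnnx
        calc R n / (n:ℝ)^x ≤ R n / n := this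
        _ ≤ _ := by nlinarith [hg2, hg3]
    -- sum the pointwise bound
    have hsum2 : Summable (fun n ↦ if n ∈ range N then R n else 0) :=
      summable_of_ne_finset_zero (s := range N) (fun n hn ↦ if_neg hn)
    have hsum3 : Summable (fun n ↦ (x-1)⁻¹ * (if n ∈ range N then 0 else u n)) :=
      (htail_sum N).mul_left _
    have hbound := Summable.tsum_le_tsum hpt hsumx (hKsum.add (hsum2.add hsum3))
    rw [hKsum.tsum_add (hsum2.add hsum3), hsum2.tsum_add hsum3, tsum_mul_left] at hbound
    have hg2val : ∑' n, (if n ∈ range N then R n else 0) = M := by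
      rw [tsum_eq_sum (s := range N) (fun n hn ↦ if_neg hn)]
      exact Finset.sum_congr rfl (fun n hn ↦ if_pos hn)
    rw [hg2val] at hbound
    have hCx := hC hx
    have h32 : Nat.totient 3 = 2 := by decide
    rw [h32] at hCx
    have hTle : (x-1)⁻¹ * T ≤ (x-1)⁻¹ * 4⁻¹ :=
      mul_le_mul_of_nonneg_left hN.le (by positivity)
    have hsplit : (2:ℝ)⁻¹ * (x-1)⁻¹ = 4⁻¹*(x-1)⁻¹ + 4⁻¹*(x-1)⁻¹ := by ring
    rw [div_eq_mul_inv] at hCx ⊢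
    push_cast at hCx
    linarith [hbound, hCx, hTle, hsplit]
  -- contradiction as x → 1⁺
  set D := C + K + M with hD
  set D' := max D 1 with hD'
  have hD'pos : (0:ℝ) < D' := lt_of_lt_of_le one_pos (le_max_right _ _)
  set δ := min 1 (8*D')⁻¹ with hδ
  have hδpos : 0 < δ := lt_min one_pos (by positivity)
  have hδ1 : δ ≤ 1 := min_le_left _ _
  have hmem : (1+δ) ∈ Set.Ioc (1:ℝ) 2 := ⟨by linarith, by linarith⟩
  have h1 := main (1+δ) hmem
  have hδinv : (8*D') ≤ δ⁻¹ := by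
    rw [← inv_inv (8*D')]
    exact inv_anti₀ hδpos (min_le_right _ _)
  have : (4:ℝ)⁻¹ / (1+δ-1) = 4⁻¹ * δ⁻¹ := by
    rw [div_eq_mul_inv]; congr 1; ring
  rw [this] at h1
  have h2 : 2*D' ≤ 4⁻¹ * δ⁻¹ := by linarith
  have h3 : D ≤ D' := le_max_left _ _
  linarith
end Analytic

lemma sieve_count (P : Finset ℕ) (hP : ∀ p ∈ P, p.Prime) (h2 : 2 ∉ P) (k : ℕ) :
    ((range (k+1)).filter (fun c ↦ ∀ p ∈ P, ¬ p ∣ (2*c+1))).card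
      ≤ (k / (∏ p ∈ P, p) + 1) * (∏ p ∈ P, p).totient := by
  classical
  set M := ∏ p ∈ P, p with hM
  have hMpos : 0 < M := Finset.prod_pos (fun p hp ↦ (hP p hp).pos)
  have hModd : ¬ 2 ∣ M := by
    intro hdvd
    obtain ⟨p, hp, hpd⟩ := (Prime.dvd_finset_prod_iff Nat.prime_two.prime _).mp hdvd
    exact h2 (((Nat.prime_dvd_prime_iff_eq Nat.prime_two (hP p hp)).mp hpd) ▸ hp)
  have hcop2 : Nat.gcd M 2 = 1 :=
    Nat.Coprime.symm ((Nat.prime_two.coprime_iff_not_dvd).mpr hModd)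
  have hcard : ((range M).filter (fun a ↦ M.Coprime a)).card = M.totient :=
    (Nat.totient_eq_card_coprime M).symm
  rw [← hcard, ← Finset.card_range (k / M + 1), ← Finset.card_product]
  apply Finset.card_le_card_of_injOn (fun c ↦ (c / M, (2*c+1) % M))
  · -- maps into
    intro c hc
    simp only [Finset.mem_coe, Finset.mem_filter, Finset.mem_range] at hc
    obtain ⟨hck, hcdvd⟩ := hc
    have hcop : Nat.Coprime M (2*c+1) := by
      rw [hM, Nat.coprime_prod_left_iff]
      exact fun p hp ↦ ((hP p hp).coprime_iff_not_dvd).mpr (hcdvd p hp)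
    simp only [Finset.mem_coe, Finset.mem_product, Finset.mem_range, Finset.mem_filter]
    refine ⟨?_, Nat.mod_lt _ hMpos, ?_⟩
    · have : c / M ≤ k / M := Nat.div_le_div_right (by omega)
      omega
    · show Nat.Coprime M ((2*c+1) % M)
      unfold Nat.Coprime
      rw [Nat.gcd_comm, ← Nat.gcd_rec]
      exact hcop
  · -- injective
    intro c1 hc1 c2 hc2 heq
    simp only [Prod.mk.injEq] at heq
    obtain ⟨hdiv, hmod⟩ := heq
    have hmeq : (2*c1+1) ≡ (2*c2+1) [MOD M] := hmod
    have h2c : 2*c1 ≡ 2*c2 [MOD M] := Nat.ModEq.add_right_cancel' 1 hmeq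
    have hceq : c1 ≡ c2 [MOD M] := Nat.ModEq.cancel_left_of_coprime hcop2 h2c
    have ha3 : c1 % M = c2 % M := hceq
    calc c1 = M * (c1 / M) + c1 % M := (Nat.div_add_mod c1 M).symm
    _ = M * (c2 / M) + c2 % M := by rw [hdiv, ha3]
    _ = c2 := Nat.div_add_mod c2 M

lemma totient_bound (P : Finset ℕ) (hP : ∀ p ∈ P, p.Prime) :
    ((∏ p ∈ P, p).totient : ℝ) ≤ (∏ p ∈ P, p : ℕ) * Real.exp (-∑ p ∈ P, (p:ℝ)⁻¹) := by
  have hpf : (∏ p ∈ P, p).primeFactors = P := Nat.primeFactors_prod hP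
  have hq : ((∏ p ∈ P, p).totient : ℚ) = (∏ p ∈ P, p : ℕ) * ∏ p ∈ P, (1 - (p:ℚ)⁻¹) := by
    rw [Nat.totient_eq_mul_prod_factors, hpf]
  have hr : ((∏ p ∈ P, p).totient : ℝ) = (∏ p ∈ P, p : ℕ) * ∏ p ∈ P, (1 - (p:ℝ)⁻¹) := by
    exact_mod_cast congrArg (fun q : ℚ ↦ (q : ℝ)) hq |>.trans (by push_cast; ring)
  rw [hr]
  have hprod : ∏ p ∈ P, (1 - (p:ℝ)⁻¹) ≤ Real.exp (-∑ p ∈ P, (p:ℝ)⁻¹) := by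
    rw [← Finset.sum_neg_distrib, Real.exp_sum]
    apply Finset.prod_le_prod
    · intro p hp
      have : (2:ℝ) ≤ p := by exact_mod_cast (hP p hp).two_le
      have : (p:ℝ)⁻¹ ≤ 2⁻¹ := by
        apply inv_anti₀ (by norm_num) this
      linarith
    · intro p hp
      have := Real.add_one_le_exp (-(p:ℝ)⁻¹)
      linarith
  have : (0:ℝ) ≤ (∏ p ∈ P, p : ℕ) := Nat.cast_nonneg _
  exact mul_le_mul_of_nonneg_left hprod this

lemma exists_P (B : ℝ) : ∃ P : Finset ℕ, (∀ p ∈ P, p.Prime) ∧ 2 ∉ P ∧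
    (∀ p ∈ P, (p : ZMod 3) = 2) ∧ B ≤ ∑ p ∈ P, (p:ℝ)⁻¹ := by
  have hdiv := (not_summable_iff_tendsto_nat_atTop_of_nonneg u_nonneg).mp not_summable_u
  obtain ⟨N, hN⟩ := (hdiv.eventually_ge_atTop (B + 1)).exists
  refine ⟨(range N).filter (fun n ↦ n.Prime ∧ (n : ZMod 3) = 2 ∧ n ≠ 2), ?_, ?_, ?_, ?_⟩
  · intro p hp; exact (Finset.mem_filter.mp hp).2.1
  · intro h; exact (Finset.mem_filter.mp h).2.2.2 rfl
  · intro p hp; exact (Finset.mem_filter.mp hp).2.2.1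
  · rw [Finset.sum_filter]
    have hpt : ∀ n ∈ range N, u n ≤ (if n.Prime ∧ (n : ZMod 3) = 2 ∧ n ≠ 2 then (n:ℝ)⁻¹ else 0)
        + (if n = 2 then (2:ℝ)⁻¹ else 0) := by
      intro n _
      unfold u
      by_cases h2 : n = 2
      · subst h2; norm_num
      · rw [if_neg h2]
        by_cases h : n.Prime ∧ (n : ZMod 3) = 2
        · rw [if_pos h, if_pos ⟨h.1, h.2, h2⟩]; simp
        · rw [if_neg h, if_neg (fun hc ↦ h ⟨hc.1, hc.2.1⟩)]; simp
    have hsum := Finset.sum_le_sum hpt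
    rw [Finset.sum_add_distrib] at hsum
    have h2sum : ∑ n ∈ range N, (if n = 2 then (2:ℝ)⁻¹ else 0) ≤ 1 := by
      rw [Finset.sum_ite_eq' (range N) 2 (fun _ ↦ (2:ℝ)⁻¹)]
      split <;> norm_num
    linarith [hN]

/-- The set `C_3` of coordinates of 3-color fair games has natural density zero. -/
theorem stmt_15 :
    Tendsto (fun k : ℕ => (({c ∈ C3 | c ≤ k}).ncard : ℝ) / k) atTop (nhds 0) := by
  rw [Metric.tendsto_atTop]
  intro ε hε
  -- choose the sieve primes
  obtain ⟨P, hPp, hP2, hPmod, hPsum⟩ := exists_P (-Real.log (ε/2))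
  set M := ∏ p ∈ P, p with hM
  have hMpos : 0 < M := Finset.prod_pos (fun p hp ↦ (hPp p hp).pos)
  set t := ((M.totient : ℕ) : ℝ) with ht
  have htnn : 0 ≤ t := Nat.cast_nonneg _
  have hmpos : (0:ℝ) < M := by exact_mod_cast hMpos
  -- t / M ≤ ε/2
  have htM : t / (M:ℝ) ≤ ε / 2 := by
    have h1 := totient_bound P hPp
    have h2 : Real.exp (-∑ p ∈ P, (p:ℝ)⁻¹) ≤ Real.exp (Real.log (ε/2)) := by
      apply Real.exp_le_exp.mpr
      linarith
    rw [Real.exp_log (by linarith)] at h2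
    rw [div_le_iff₀ hmpos]
    calc t ≤ (M:ℝ) * Real.exp (-∑ p ∈ P, (p:ℝ)⁻¹) := h1
    _ ≤ (M:ℝ) * (ε/2) := mul_le_mul_of_nonneg_left h2 hmpos.le
    _ = ε/2 * (M:ℝ) := by ring
  obtain ⟨N₀, hN₀⟩ := exists_nat_ge (2*(t+1)/ε)
  refine ⟨max N₀ 1, fun k hk ↦ ?_⟩
  have hk1 : 1 ≤ k := le_trans (le_max_right _ _) hk
  have hkpos : (0:ℝ) < k := by exact_mod_cast hk1
  have hkN₀ : (2*(t+1)/ε) ≤ (k:ℝ) := le_trans hN₀ (by exact_mod_cast le_trans (le_max_left _ _) hk)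
  -- the counting bound
  set S := (range (k+1)).filter (fun c ↦ ∀ p ∈ P, ¬ p ∣ (2*c+1)) with hS
  have hsub : {c ∈ C3 | c ≤ k} ⊆ ↑S := by
    intro c hc
    obtain ⟨hcC3, hck⟩ := hc
    simp only [hS, Finset.coe_filter, Set.mem_setOf_eq, Finset.mem_range]
    exact ⟨by omega, fun p hp hdvd ↦ C3_coprime hcC3 (hPp p hp) hdvd (hPmod p hp)⟩
  have hncard : ({c ∈ C3 | c ≤ k}).ncard ≤ S.card := by
    rw [← Set.ncard_coe_finset S]
    exact Set.ncard_le_ncard hsub (S.finite_toSet)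
  have hcount : (({c ∈ C3 | c ≤ k}).ncard : ℝ) ≤ ((k / M + 1 : ℕ) : ℝ) * t := by
    have h := le_trans hncard (sieve_count P hPp hP2 k)
    rw [← hM] at h
    rw [ht]
    exact_mod_cast h
  have hdivle : ((k / M : ℕ) : ℝ) ≤ (k:ℝ) / (M:ℝ) := Nat.cast_div_le
  have hcount2 : (({c ∈ C3 | c ≤ k}).ncard : ℝ) ≤ ((k:ℝ)/(M:ℝ) + 1) * t := by
    calc (({c ∈ C3 | c ≤ k}).ncard : ℝ) ≤ ((k / M + 1 : ℕ) : ℝ) * t := hcount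
    _ ≤ ((k:ℝ)/(M:ℝ) + 1) * t := by
        apply mul_le_mul_of_nonneg_right _ htnn
        push_cast
        linarith [hdivle]
  -- conclude
  rw [Real.dist_eq, sub_zero, abs_of_nonneg (by positivity)]
  have hfk : (({c ∈ C3 | c ≤ k}).ncard : ℝ) / k ≤ t/(M:ℝ) + t/(k:ℝ) := by
    rw [div_le_iff₀ hkpos]
    calc (({c ∈ C3 | c ≤ k}).ncard : ℝ) ≤ ((k:ℝ)/(M:ℝ) + 1) * t := hcount2
    _ = (t/(M:ℝ) + t/(k:ℝ)) * k := by field_simp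
  have htk : t/(k:ℝ) < ε/2 := by
    have hc : (0:ℝ) < 2*(t+1)/ε := by positivity
    have h1 : t/(k:ℝ) ≤ t/(2*(t+1)/ε) := by
      apply div_le_div_of_nonneg_left htnn hc hkN₀
    have h2 : t/(2*(t+1)/ε) = t*ε/(2*(t+1)) := by field_simp
    have h3 : t*ε/(2*(t+1)) < ε/2 := by
      rw [div_lt_div_iff₀ (by positivity) (by norm_num)]
      nlinarith
    linarith
  linarith [hfk, htM, htk]
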